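/- Let R be a reduced Noetherian commutative ring with connected spectrum, and M a finitely generated R-module. If Supp(M) = Spec R and V(Fitt_1(M)) = ∅ (i.e., the first Fitting ideal is the unit ideal), then M is a flat R-module of constant rank one, i.e., M is an invertible module. -/

import Mathlib

open scoped BigOperators Matrix


lemma aux_inv {S N : Type*} [CommRing S] [AddCommGroup N] [Module S N] {r : ℕ}
    (D : Matrix (Fin r) (Fin r) S) (hD : IsUnit D.det) (u v : Fin r → N)
    (h : ∀ l, ∑ k, D l k • u k = v l) (k : Fin r) :
    u k = ∑ l, D⁻¹ k l • v l := by
  calc u k = ∑ k', (1 : Matrix (Fin r) (Fin r) S) k k' • u k' := by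
        simp [Matrix.one_apply, ite_smul]
    _ = ∑ k', ((D⁻¹ * D) k k') • u k' := by rw [Matrix.nonsing_inv_mul D hD]
    _ = ∑ l, D⁻¹ k l • v l := by
        simp_rw [Matrix.mul_apply, Finset.sum_smul, mul_smul]
        rw [Finset.sum_comm]
        refine Finset.sum_congr rfl fun l _ => ?_
        rw [← Finset.smul_sum, h l]

lemma key_lemma {R M : Type*} [CommRing R] [AddCommGroup M] [Module R M] {m n : ℕ}
    (A : Matrix (Fin m) (Fin n) R) (π : (Fin m → R) →ₗ[R] M)
    (hsurj : Function.Surjective π)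
    (hker : LinearMap.ker π = LinearMap.range A.mulVecLin)
    (hann : Module.annihilator R M = ⊥)
    (q : Ideal R) [q.IsPrime]
    {f : Fin (m-1) → Fin m} {g : Fin (m-1) → Fin n}
    (hd : (A.submatrix f g).det ∉ q) (hm : 0 < m) :
    Nonempty (LocalizedModule q.primeCompl M ≃ₗ[Localization.AtPrime q]
      Localization.AtPrime q) := by
  set S := q.primeCompl with hS
  let Rq := Localization.AtPrime q
  let Mq := LocalizedModule S M
  let mk : M →ₗ[R] Mq := LocalizedModule.mkLinearMap S M
  let al : R →+* Rq := algebraMap R Rq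
  -- f is injective
  have hfinj : Function.Injective f := by
    intro a b hab
    by_contra hne
    refine hd ?_
    have : (A.submatrix f g).det = 0 :=
      Matrix.det_zero_of_row_eq hne (by funext l; simp [Matrix.submatrix_apply, hab])
    rw [this]; exact q.zero_mem
  -- the unique index outside the range of f
  set T : Finset (Fin m) := Finset.univ.image f with hT
  have hTcard : T.card = m - 1 := by
    rw [hT, Finset.card_image_of_injective _ hfinj, Finset.card_univ, Fintype.card_fin]
  have hcompl : Tᶜ.card = 1 := by
    rw [Finset.card_compl, hTcard, Fintype.card_fin]; omega
  obtain ⟨i0, hi0⟩ := Finset.card_eq_one.mp hcompl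
  have huniq : ∀ i : Fin m, i ∉ T → i = i0 := fun i hi => by
    have : i ∈ Tᶜ := Finset.mem_compl.mpr hi
    rw [hi0] at this; simpa using this
  -- generators
  set x : Fin m → Mq := fun i => mk (π (Pi.single i (1:R))) with hx
  -- splitting sums over Fin m
  have hsplit : ∀ (h : Fin m → Mq), ∑ i, h i = (∑ k, h (f k)) + h i0 := by
    intro h
    have h1 : ∑ i ∈ Finset.univ \ T, h i + ∑ i ∈ T, h i = ∑ i, h i :=
      Finset.sum_sdiff (Finset.subset_univ T)
    have h2 : Finset.univ \ T = Tᶜ := (Finset.compl_eq_univ_sdiff T).symm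
    rw [h2, hi0, Finset.sum_singleton] at h1
    rw [← h1, hT, Finset.sum_image (fun a _ b _ hab => hfinj hab), add_comm]
  -- column relations
  have hrel : ∀ j : Fin n, ∑ i, A i j • x i = 0 := by
    intro j
    have h1 : (fun i => A i j) ∈ LinearMap.range A.mulVecLin := by
      refine ⟨Pi.single j 1, ?_⟩
      funext i
      simp [Matrix.mulVecLin_apply, Matrix.mulVec, dotProduct, Pi.single_apply,
        mul_ite, mul_one, mul_zero]
    have h2 : π (fun i => A i j) = 0 := by
      rw [← LinearMap.mem_ker, hker]; exact h1
    have h4 : (∑ i, A i j • (Pi.single i (1:R) : Fin m → R)) = fun i => A i j := by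
      funext i'
      simp [Finset.sum_apply, Pi.single_apply, mul_ite, mul_one, mul_zero]
    have h3 : ∑ i, A i j • x i = mk (π (∑ i, A i j • (Pi.single i (1:R) : Fin m → R))) := by
      rw [map_sum, map_sum]
      refine Finset.sum_congr rfl fun i _ => ?_
      rw [map_smul, map_smul]
    rw [h3, h4, h2, map_zero]
  -- the invertible matrix over Rq
  set D : Matrix (Fin (m-1)) (Fin (m-1)) Rq := fun l k => al (A (f k) (g l)) with hD
  have hDdet : IsUnit D.det := by
    have hDeq : Dᵀ = (A.submatrix f g).map al := by
      ext k l
      simp [hD, Matrix.submatrix_apply, Matrix.map_apply, Matrix.transpose_apply]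
      rfl
    rw [← Matrix.det_transpose, hDeq, ← RingHom.mapMatrix_apply, ← RingHom.map_det]
    exact IsLocalization.map_units Rq (⟨_, hd⟩ : S)
  -- the relation in matrix form
  have hr2 : ∀ l, ∑ k, D l k • x (f k) = (- al (A i0 (g l))) • x i0 := by
    intro l
    have h0 := hrel (g l)
    rw [hsplit (fun i => A i (g l) • x i)] at h0
    have h3 : ∑ k, D l k • x (f k) = ∑ k, A (f k) (g l) • x (f k) := by
      refine Finset.sum_congr rfl fun k _ => ?_
      exact algebraMap_smul Rq _ _
    rw [h3, neg_smul, algebraMap_smul]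
    exact eq_neg_of_add_eq_zero_left h0
  have hxf : ∀ k, x (f k) = (∑ l, D⁻¹ k l * (- al (A i0 (g l)))) • x i0 := by
    intro k
    have := aux_inv D hDdet (fun k => x (f k)) (fun l => (- al (A i0 (g l))) • x i0) hr2 k
    rw [this, Finset.sum_smul]
    refine Finset.sum_congr rfl fun l _ => ?_
    rw [mul_smul]
  -- span
  have hxmem : ∀ i, x i ∈ Submodule.span Rq {x i0} := by
    intro i
    by_cases hi : i ∈ T
    · rw [hT] at hi
      obtain ⟨k, -, rfl⟩ := Finset.mem_image.mp hi
      rw [hxf k]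
      exact Submodule.smul_mem _ _ (Submodule.mem_span_singleton_self _)
    · rw [huniq i hi]; exact Submodule.mem_span_singleton_self _
  have hwsum : ∀ w : Fin m → R, w = ∑ i, w i • (Pi.single i (1:R) : Fin m → R) := by
    intro w
    funext i'
    simp [Finset.sum_apply, Pi.single_apply, mul_ite, mul_one, mul_zero]
  have hmk : ∀ y : M, mk y ∈ Submodule.span Rq {x i0} := by
    intro y
    obtain ⟨w, rfl⟩ := hsurj y
    rw [hwsum w, map_sum, map_sum]
    refine Submodule.sum_mem _ fun i _ => ?_
    rw [map_smul, map_smul, ← algebraMap_smul Rq (w i)]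
    exact Submodule.smul_mem _ _ (hxmem i)
  have hspan : Submodule.span Rq {x i0} = ⊤ := by
    rw [eq_top_iff]
    rintro z -
    obtain ⟨⟨y, s⟩, rfl⟩ := IsLocalizedModule.mk'_surjective S mk z
    simp only [Function.uncurry_apply_pair]
    have hu : IsUnit (al (s : R)) := IsLocalization.map_units Rq s
    have h5 : (al (s : R)) • IsLocalizedModule.mk' mk y s = mk y := by
      rw [algebraMap_smul]
      exact IsLocalizedModule.mk'_cancel' mk y s
    have h6 : IsLocalizedModule.mk' mk y s = (↑hu.unit⁻¹ : Rq) • mk y := by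
      rw [← h5, smul_smul, IsUnit.val_inv_mul, one_smul]
    rw [h6]
    exact Submodule.smul_mem _ _ (hmk y)
  -- the map
  let φ : Rq →ₗ[Rq] Mq := LinearMap.toSpanSingleton Rq Mq (x i0)
  have hφsurj : Function.Surjective φ := by
    rw [← LinearMap.range_eq_top, ← LinearMap.span_singleton_eq_range, hspan]
  have hφinj : Function.Injective φ := by
    rw [injective_iff_map_eq_zero]
    intro r hr
    obtain ⟨⟨a, s⟩, rfl⟩ := IsLocalization.mk'_surjective S r
    have hr' : IsLocalization.mk' Rq a s • x i0 = 0 := hr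
    -- al a • x i0 = 0
    have h7 : al a • x i0 = 0 := by
      rw [← IsLocalization.mk'_spec Rq a s, mul_comm, mul_smul, hr', smul_zero]
    -- a annihilates all of Mq
    have h9 : ∀ z : Mq, al a • z = 0 := by
      intro z
      have hz : z ∈ Submodule.span Rq {x i0} := hspan ▸ Submodule.mem_top
      obtain ⟨c, rfl⟩ := Submodule.mem_span_singleton.mp hz
      rw [smul_comm, h7, smul_zero]
    -- choose t i killing a • π (single i 1)
    have h10 : ∀ i : Fin m, ∃ t : S, (t : R) • (a • π (Pi.single i (1:R))) = 0 := by
      intro i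
      have h9' := h9 (x i)
      rw [hx] at h9'
      simp only at h9'
      rw [algebraMap_smul, ← map_smul] at h9'
      exact (IsLocalizedModule.eq_zero_iff S mk).mp h9'
    choose t ht using h10
    set T0 : S := ∏ i, t i with hT0
    have hT0c : (T0 : R) = ∏ i, (t i : R) := by
      rw [hT0]; exact SubmonoidClass.coe_finset_prod _ _
    have h11 : ∀ i, ((T0 : R) * a) • π (Pi.single i (1:R)) = 0 := by
      intro i
      have hsplitT0 : (T0 : R) = (∏ j ∈ Finset.univ.erase i, (t j : R)) * (t i : R) := by
        rw [hT0c, Finset.prod_erase_mul _ _ (Finset.mem_univ i)]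
      rw [hsplitT0, mul_assoc, mul_smul, mul_smul, ht i, smul_zero]
    have h12 : (T0 : R) * a ∈ Module.annihilator R M := by
      rw [Module.mem_annihilator]
      intro y
      obtain ⟨w, rfl⟩ := hsurj y
      rw [hwsum w, map_sum, Finset.smul_sum]
      refine Finset.sum_eq_zero fun i _ => ?_
      rw [map_smul, smul_comm, h11, smul_zero]
    rw [hann, Ideal.mem_bot] at h12
    have h13 : al a = 0 := by
      have h14 : al (T0 : R) * al a = 0 := by rw [← map_mul, h12, map_zero]
      have hu : IsUnit (al (T0 : R)) := IsLocalization.map_units Rq T0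
      exact (hu.mul_right_eq_zero).mp h14
    have h15 := IsLocalization.mk'_spec Rq a s
    rw [h13] at h15
    have hu : IsUnit (al (s : R)) := IsLocalization.map_units Rq s
    exact (hu.mul_left_eq_zero).mp h15
  exact ⟨(LinearEquiv.ofBijective φ ⟨hφinj, hφsurj⟩).symm⟩

/-- The `k`-th Fitting ideal of the module presented by the matrix `A` (with `m` generators):
the ideal generated by the `(m-k) × (m-k)` minors of `A`. -/
noncomputable def fittIdeal {R : Type*} [CommRing R] {m n : ℕ}
    (A : Matrix (Fin m) (Fin n) R) (k : ℕ) : Ideal R :=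
  Ideal.span { x | ∃ (f : Fin (m - k) → Fin m) (g : Fin (m - k) → Fin n),
    x = (A.submatrix f g).det }

/-- Let `R` be a reduced Noetherian commutative ring with connected spectrum and `M` a finitely
generated `R`-module (presented by a matrix `A`). If `Supp M = Spec R` and
`V(Fitt₁ M) = ∅` (i.e. `Fitt₁ M = R`), then `M` is a flat `R`-module of constant rank one,
i.e. `M` is an invertible module. -/
theorem stmt3 {R M : Type*} [CommRing R] [IsNoetherianRing R] [IsReduced R]
    [ConnectedSpace (PrimeSpectrum R)]
    [AddCommGroup M] [Module R M] {m n : ℕ}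
    (A : Matrix (Fin m) (Fin n) R) (π : (Fin m → R) →ₗ[R] M)
    (hsurj : Function.Surjective π)
    (hker : LinearMap.ker π = LinearMap.range A.mulVecLin)
    (hsupp : Module.support R M = Set.univ)
    (hfitt : fittIdeal A 1 = ⊤) :
    Module.Flat R M ∧
      ∀ p : PrimeSpectrum R,
        Nonempty (LocalizedModule p.asIdeal.primeCompl M ≃ₗ[Localization.AtPrime p.asIdeal]
          Localization.AtPrime p.asIdeal) := by
  rcases subsingleton_or_nontrivial R with hR | hR
  · refine ⟨(by haveI := Module.Free.of_subsingleton' R M; infer_instance), fun p => (IsEmpty.false p).elim⟩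
  · haveI : Module.Finite R M := Module.Finite.of_surjective π hsurj
    have hann : Module.annihilator R M = ⊥ := by
      have h1 : PrimeSpectrum.zeroLocus ((Module.annihilator R M : Ideal R) : Set R)
          = Set.univ := by
        rw [← Module.support_eq_zeroLocus, hsupp]
      have h2 : Module.annihilator R M ≤ nilradical R := by
        rw [nilradical_eq_sInf]
        refine le_sInf fun J hJ => ?_
        have h3 : (⟨J, hJ⟩ : PrimeSpectrum R) ∈
            PrimeSpectrum.zeroLocus ((Module.annihilator R M : Ideal R) : Set R) :=
          h1 ▸ Set.mem_univ _
        exact (PrimeSpectrum.mem_zeroLocus _ _).mp h3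
      rw [nilradical_eq_zero] at h2
      simpa using h2
    have hm : 0 < m := by
      by_contra h
      have hm0 : m = 0 := by omega
      subst hm0
      haveI : Subsingleton M :=
        ⟨fun a b => by
          obtain ⟨u, rfl⟩ := hsurj a; obtain ⟨v, rfl⟩ := hsurj b
          congr 1; exact Subsingleton.elim u v⟩
      have : Module.support R M = ∅ := Module.support_eq_empty
      rw [hsupp] at this
      have : (Classical.arbitrary (PrimeSpectrum R)) ∈ (∅ : Set (PrimeSpectrum R)) := by
        rw [← this]; exact Set.mem_univ _
      exact this
    have hminor : ∀ q : Ideal R, q.IsPrime →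
        ∃ (f : Fin (m-1) → Fin m) (g : Fin (m-1) → Fin n), (A.submatrix f g).det ∉ q := by
      intro q hq
      by_contra h
      push_neg at h
      have hle : fittIdeal A 1 ≤ q := by
        rw [fittIdeal]
        refine Ideal.span_le.mpr ?_
        rintro y ⟨f, g, rfl⟩
        exact h f g
      rw [hfitt] at hle
      exact hq.ne_top (top_le_iff.mp hle)
    constructor
    · haveI : Module.FinitePresentation R M := Module.finitePresentation_of_finite R M
      haveI : Module.Projective R M := by
        apply Module.projective_of_localization_maximal
        intro I hI
        haveI := hI.isPrime
        obtain ⟨f, g, hd⟩ := hminor I hI.isPrime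
        obtain ⟨e⟩ := key_lemma A π hsurj hker hann I hd hm
        haveI : Module.Free (Localization.AtPrime I) (LocalizedModule I.primeCompl M) :=
          Module.Free.of_equiv e.symm
        infer_instance
      infer_instance
    · intro p
      haveI := p.isPrime
      obtain ⟨f, g, hd⟩ := hminor p.asIdeal p.isPrime
      exact key_lemma A π hsurj hker hann p.asIdeal hd hm
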